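/- Let Q : ℤ × ℝ → ℝ be nowhere zero and differentiable in t, and define R(n) = −1/Q(n−1). Then Q satisfies ∂_t Q(n) = Q(n+1) − 2Q(n) − Q(n)²R(n) for all n ∈ ℤ if and only if R satisfies ∂_t R(n) = −R(n−1) + 2R(n) + Q(n)R(n)² for all n ∈ ℤ. -/

import Mathlib

/-- Consistency of the one-field reduction `R(n+1) = -1/Q(n)` with the first
flow of the refined Ragnisco-Tu hierarchy. -/
theorem ragnisco_tu_one_field_reduction_consistency
    (Q : ℤ → ℝ → ℝ) (hQ0 : ∀ n t, Q n t ≠ 0)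
    (hQd : ∀ n, Differentiable ℝ (Q n)) :
    let R : ℤ → ℝ → ℝ := fun n t => -1 / Q (n - 1) t
    ((∀ n t, deriv (Q n) t
        = Q (n + 1) t - 2 * Q n t - (Q n t) ^ 2 * R n t) ↔
     (∀ n t, deriv (R n) t
        = -R (n - 1) t + 2 * R n t + Q n t * (R n t) ^ 2)) := by
  intro R
  have hd : ∀ (n : ℤ) (t : ℝ),
      deriv (R n) t = deriv (Q (n - 1)) t / (Q (n - 1) t) ^ 2 := by
    intro n t
    have h1 : R n = fun s => -(Q (n - 1) s)⁻¹ := by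
      funext s; simp [R, neg_div, one_div]
    rw [h1, deriv.fun_neg, deriv_fun_inv'' ((hQd (n - 1)).differentiableAt) (hQ0 (n - 1) t)]
    ring
  constructor
  · intro h n t
    rw [hd n t, h (n - 1) t]
    have e1 : n - 1 + 1 = n := by ring
    rw [e1]
    have hx := hQ0 (n - 1) t
    have hy := hQ0 (n - 1 - 1) t
    have hz : n - 2 = n - 1 - 1 := by ring
    simp only [R, hz]
    field_simp
    ring
  · intro h n t
    have key := h (n + 1) t
    rw [hd (n + 1) t] at key
    have e1 : n + 1 - 1 = n := by ring
    rw [e1] at key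
    have hx := hQ0 n t
    have hy := hQ0 (n - 1) t
    simp only [R, e1] at key ⊢
    field_simp at key ⊢
    have h3 : Q n t ^ 3 ≠ 0 := pow_ne_zero 3 hx
    have key' : deriv (Q n) t * Q (n - 1) t
        = (Q (n + 1) t - 2 * Q n t) * Q (n - 1) t + Q n t ^ 2 := by
      apply mul_right_cancel₀ h3
      linear_combination Q n t ^ 3 * key
    linarith [key']
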